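/- (Hoffman type relation for t-qMZVs, depth 1) For 0 < q < 1, a real parameter t, and an integer k ≥ 2, Σ_{j=0}^{k-2} ζ_q^t(k-j, j+1) = (1 + (k-1)t)·ζ_q(k+1) + t(k-1)(1-q)·ζ_q(k). -/

import Mathlib

open scoped BigOperators

/-- The q-integer [m] = (1-q^m)/(1-q). -/
noncomputable def qint (q : ℝ) (m : ℕ) : ℝ := (1 - q ^ m) / (1 - q)

/-- Depth-one q-zeta value ζ_q(k) = Σ_{m≥1} q^{(k-1)m}/[m]^k. -/
noncomputable def zetaQ (q : ℝ) (k : ℕ) : ℝ :=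
  ∑' m : ℕ, q ^ ((k - 1) * (m + 1)) / (qint q (m + 1)) ^ k

/-- Depth-two qMZV: sum over m₁ > m₂ ≥ 1, parametrized by m₂ = p.2+1, m₁ = p.2+p.1+2. -/
noncomputable def zetaQ2 (q : ℝ) (k₁ k₂ : ℕ) : ℝ :=
  ∑' p : ℕ × ℕ,
    q ^ ((k₁ - 1) * (p.2 + p.1 + 2) + (k₂ - 1) * (p.2 + 1)) /
      ((qint q (p.2 + p.1 + 2)) ^ k₁ * (qint q (p.2 + 1)) ^ k₂)

/-- Depth-two qMZSV: sum over m₁ ≥ m₂ ≥ 1, parametrized by m₂ = p.2+1, m₁ = p.2+p.1+1. -/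
noncomputable def zetaQStar2 (q : ℝ) (k₁ k₂ : ℕ) : ℝ :=
  ∑' p : ℕ × ℕ,
    q ^ ((k₁ - 1) * (p.2 + p.1 + 1) + (k₂ - 1) * (p.2 + 1)) /
      ((qint q (p.2 + p.1 + 1)) ^ k₁ * (qint q (p.2 + 1)) ^ k₂)

/-- Interpolated q-double zeta value. -/
noncomputable def zetaQT (q t : ℝ) (k₁ k₂ : ℕ) : ℝ :=
  zetaQ2 q k₁ k₂ + t * (zetaQ q (k₁ + k₂) + (1 - q) * zetaQ q (k₁ + k₂ - 1))

section Aux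
variable {q : ℝ}

lemma one_sub_q_pos (hq1 : q < 1) : 0 < 1 - q := by linarith

lemma one_sub_pow_pos (hq0 : 0 < q) (hq1 : q < 1) (m : ℕ) : 0 < 1 - q ^ (m + 1) := by
  have : q ^ (m + 1) < 1 := pow_lt_one₀ hq0.le hq1 (by omega)
  linarith

lemma qint_pos (hq0 : 0 < q) (hq1 : q < 1) (m : ℕ) : 0 < qint q (m + 1) :=
  div_pos (one_sub_pow_pos hq0 hq1 m) (one_sub_q_pos hq1)

lemma one_le_qint (hq0 : 0 < q) (hq1 : q < 1) (m : ℕ) : 1 ≤ qint q (m + 1) := by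
  rw [qint, le_div_iff₀ (one_sub_q_pos hq1)]
  have : q ^ (m + 1) ≤ q := by
    calc q ^ (m + 1) ≤ q ^ 1 := pow_le_pow_of_le_one hq0.le hq1.le (by omega)
    _ = q := pow_one q
  linarith

lemma qint_ne (hq0 : 0 < q) (hq1 : q < 1) (m : ℕ) : qint q (m + 1) ≠ 0 :=
  (qint_pos hq0 hq1 m).ne'

lemma one_le_qint_pow (hq0 : 0 < q) (hq1 : q < 1) (m r : ℕ) : 1 ≤ (qint q (m + 1)) ^ r :=
  one_le_pow₀ (one_le_qint hq0 hq1 m)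

-- key1 : q^{m+1}/[m+1] = 1/[m+1] - (1-q)
lemma key1 (hq0 : 0 < q) (hq1 : q < 1) (m : ℕ) :
    q ^ (m + 1) / qint q (m + 1) = 1 / qint q (m + 1) - (1 - q) := by
  have h2 : (1 : ℝ) - q ≠ 0 := (one_sub_q_pos hq1).ne'
  have h3 : (1 : ℝ) - q ^ (m + 1) ≠ 0 := (one_sub_pow_pos hq0 hq1 m).ne'
  rw [qint]
  field_simp
  ring

-- difference of q-integers
lemma key2' (hq1 : q < 1) (a b : ℕ) :
    qint q (b + a + 2) - qint q (a + 1) = q ^ (a + 1) * qint q (b + 1) := by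
  have h2 : (1 : ℝ) - q ≠ 0 := (one_sub_q_pos hq1).ne'
  rw [qint, qint, qint, show b + a + 2 = (a + 1) + (b + 1) from by omega, pow_add]
  field_simp
  ring

-- key2 : q^{a+1}/([a+1][b+a+2]) = (1/[b+1])(1/[a+1] - 1/[b+a+2])
lemma key2 (hq0 : 0 < q) (hq1 : q < 1) (a b : ℕ) :
    q ^ (a + 1) / (qint q (a + 1) * qint q (b + a + 2)) =
      (1 / qint q (b + 1)) * (1 / qint q (a + 1) - 1 / qint q (b + a + 2)) := by
  have hA : qint q (a + 1) ≠ 0 := qint_ne hq0 hq1 a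
  have hB : qint q (b + 1) ≠ 0 := qint_ne hq0 hq1 b
  have hC : qint q (b + a + 2) ≠ 0 := by
    have := qint_ne hq0 hq1 (b + a + 1)
    simpa [show b + a + 1 + 1 = b + a + 2 by omega] using this
  rw [div_sub_div _ _ hA hC, one_mul, mul_one, key2' hq1 a b]
  field_simp
end Aux

section Sum
variable {q : ℝ}

lemma summable_geom1 (hq0 : 0 < q) (hq1 : q < 1) : Summable (fun n : ℕ => q ^ (n + 1)) := by
  simpa [pow_succ, mul_comm] using (summable_geometric_of_lt_one hq0.le hq1).mul_left q

lemma summable_prod_geom (hq0 : 0 < q) (hq1 : q < 1) :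
    Summable (fun p : ℕ × ℕ => q ^ (p.1 + 1) * q ^ (p.2 + 1)) :=
  summable_mul_of_summable_norm (f := fun n : ℕ => q ^ (n + 1)) (g := fun n : ℕ => q ^ (n + 1))
    (by simpa [Real.norm_eq_abs, abs_of_pos hq0] using summable_geom1 hq0 hq1)
    (by simpa [Real.norm_eq_abs, abs_of_pos hq0] using summable_geom1 hq0 hq1)

lemma summable_of_bound (hq0 : 0 < q) (hq1 : q < 1) (F : ℕ × ℕ → ℝ)
    (h : ∀ p : ℕ × ℕ, |F p| ≤ q ^ (p.1 + 1) * q ^ (p.2 + 1)) : Summable F :=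
  Summable.of_norm_bounded (summable_prod_geom hq0 hq1)
    (fun p => by rw [Real.norm_eq_abs]; exact h p)

lemma term_bound (hq0 : 0 < q) (hq1 : q < 1) {E a b : ℕ} (hE : a + b + 2 ≤ E) {D : ℝ}
    (hD : 1 ≤ D) : |q ^ E / D| ≤ q ^ (a + 1) * q ^ (b + 1) := by
  have h0 : (0 : ℝ) < q ^ E := pow_pos hq0 E
  have hD0 : (0 : ℝ) < D := lt_of_lt_of_le one_pos hD
  rw [abs_of_nonneg (by positivity)]
  calc q ^ E / D ≤ q ^ E := div_le_self h0.le hD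
    _ ≤ q ^ (a + b + 2) := pow_le_pow_of_le_one hq0.le hq1.le hE
    _ = q ^ (a + 1) * q ^ (b + 1) := by rw [← pow_add]; ring_nf
end Sum

section KeyGeom
variable {q : ℝ}

lemma key3 (hq1 : q < 1) (a b : ℕ) :
    q ^ (b + 1) * qint q (b + a + 2) - qint q (b + 1) * q ^ (b + a + 2) =
      q ^ (b + 1) * qint q (a + 1) := by
  have h2 : (1 : ℝ) - q ≠ 0 := (one_sub_q_pos hq1).ne'
  rw [qint, qint, qint]
  field_simp
  ring

lemma keyGeom (hq0 : 0 < q) (hq1 : q < 1) (K a b : ℕ) :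
    ∑ j ∈ Finset.range (K + 1),
      q ^ ((K + 2 - j - 1) * (b + a + 2) + j * (b + 1)) /
        (qint q (b + a + 2) ^ (K + 2 - j) * qint q (b + 1) ^ (j + 1)) =
    q ^ (a + 1) * (q ^ ((K + 1) * (b + 1)) / qint q (b + 1) ^ (K + 1)) /
        (qint q (a + 1) * qint q (b + a + 2)) -
      q ^ (a + 1) * q ^ ((K + 1) * (b + a + 2)) /
        (qint q (a + 1) * qint q (b + a + 2) ^ (K + 2)) := by
  have hN : qint q (a + 1) ≠ 0 := qint_ne hq0 hq1 a
  have hM2 : qint q (b + 1) ≠ 0 := qint_ne hq0 hq1 b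
  have hM1 : qint q (b + a + 2) ≠ 0 := by
    have := qint_ne hq0 hq1 (b + a + 1)
    simpa [show b + a + 1 + 1 = b + a + 2 by omega] using this
  set X : ℝ := q ^ (b + a + 2) / qint q (b + a + 2) with hX
  set Y : ℝ := q ^ (b + 1) / qint q (b + 1) with hY
  -- step 1 : each summand
  have step1 : ∀ j ∈ Finset.range (K + 1),
      q ^ ((K + 2 - j - 1) * (b + a + 2) + j * (b + 1)) /
        (qint q (b + a + 2) ^ (K + 2 - j) * qint q (b + 1) ^ (j + 1)) =
      X ^ (K + 1 - j) * Y ^ j / (qint q (b + a + 2) * qint q (b + 1)) := by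
    intro j hj
    rw [Finset.mem_range] at hj
    rw [show K + 2 - j - 1 = K + 1 - j from by omega, show K + 2 - j = (K + 1 - j) + 1 from by omega]
    generalize K + 1 - j = i
    have hP1 : 0 < qint q (b + a + 2) := by
      have := qint_pos hq0 hq1 (b + a + 1)
      simpa [show b + a + 1 + 1 = b + a + 2 by omega] using this
    have hP2 : 0 < qint q (b + 1) := qint_pos hq0 hq1 b
    rw [hX, hY, div_pow, div_pow, div_mul_div_comm, div_div]
    rw [div_eq_div_iff (by positivity) (by positivity)]
    ring
  rw [Finset.sum_congr rfl step1, ← Finset.sum_div]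
  -- step 2 : geometric sum
  have step2 : (∑ j ∈ Finset.range (K + 1), X ^ (K + 1 - j) * Y ^ j) * (Y - X) =
      X * Y ^ (K + 1) - X ^ (K + 2) := by
    have e1 : ∑ j ∈ Finset.range (K + 1), X ^ (K + 1 - j) * Y ^ j =
        X * ∑ j ∈ Finset.range (K + 1), Y ^ j * X ^ (K + 1 - 1 - j) := by
      rw [Finset.mul_sum]
      refine Finset.sum_congr rfl fun j hj => ?_
      rw [Finset.mem_range] at hj
      rw [show K + 1 - j = (K + 1 - 1 - j) + 1 from by omega, pow_succ]
      ring
    rw [e1, mul_assoc, geom_sum₂_mul Y X (K + 1)]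
    ring
  -- step 3 : Y - X
  have step3 : Y - X = q ^ (b + 1) * qint q (a + 1) / (qint q (b + a + 2) * qint q (b + 1)) := by
    rw [hX, hY, div_sub_div _ _ hM2 hM1, ← key3 hq1 a b]
    rw [mul_comm (qint q (b + a + 2))]
  have hYXpos : 0 < Y - X := by
    rw [step3]
    have h1 := qint_pos hq0 hq1 a
    have h2 := qint_pos hq0 hq1 b
    have h3 : 0 < qint q (b + a + 2) := by
      have := qint_pos hq0 hq1 (b + a + 1)
      simpa [show b + a + 1 + 1 = b + a + 2 by omega] using this
    positivity
  have hsum : (∑ j ∈ Finset.range (K + 1), X ^ (K + 1 - j) * Y ^ j) =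
      (X * Y ^ (K + 1) - X ^ (K + 2)) / (Y - X) := (eq_div_iff hYXpos.ne').2 step2
  rw [hsum, step3, hX, hY]
  have hqne : q ≠ 0 := hq0.ne'
  clear_value X Y
  clear hsum step1 step2 step3 hYXpos hX hY
  generalize qint q (a + 1) = N at hN ⊢
  generalize qint q (b + 1) = M at hM2 ⊢
  generalize qint q (b + a + 2) = P at hM1 ⊢
  rw [div_pow, div_pow, ← pow_mul, ← pow_mul]
  field_simp
  ring
end KeyGeom

noncomputable def eeF (q : ℝ) (n : ℕ) : ℝ := q ^ (n + 1) / qint q (n + 1)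
noncomputable def ddF (q : ℝ) (K b : ℕ) : ℝ := q ^ ((K + 1) * (b + 1)) / qint q (b + 1) ^ (K + 2)
noncomputable def SSF (q : ℝ) (r : ℕ) : ℝ := ∑ i ∈ Finset.range r, eeF q i

section Tel
variable {q : ℝ}

lemma eeF_nonneg (hq0 : 0 < q) (hq1 : q < 1) (n : ℕ) : 0 ≤ eeF q n :=
  le_of_lt (div_pos (pow_pos hq0 _) (qint_pos hq0 hq1 n))

lemma eeF_le (hq0 : 0 < q) (hq1 : q < 1) (n : ℕ) : eeF q n ≤ q ^ (n + 1) :=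
  div_le_self (pow_pos hq0 _).le (one_le_qint hq0 hq1 n)

lemma summable_eeF (hq0 : 0 < q) (hq1 : q < 1) : Summable (eeF q) :=
  Summable.of_nonneg_of_le (eeF_nonneg hq0 hq1) (eeF_le hq0 hq1) (summable_geom1 hq0 hq1)

lemma SSF_nonneg (hq0 : 0 < q) (hq1 : q < 1) (r : ℕ) : 0 ≤ SSF q r :=
  Finset.sum_nonneg fun i _ => eeF_nonneg hq0 hq1 i

lemma SSF_le (hq0 : 0 < q) (hq1 : q < 1) (r : ℕ) : SSF q r ≤ ∑' n : ℕ, q ^ (n + 1) := by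
  calc SSF q r ≤ ∑ i ∈ Finset.range r, q ^ (i + 1) :=
        Finset.sum_le_sum fun i _ => eeF_le hq0 hq1 i
    _ ≤ ∑' n : ℕ, q ^ (n + 1) :=
        Summable.sum_le_tsum _ (fun i _ => (pow_pos hq0 _).le) (summable_geom1 hq0 hq1)

lemma tsum_telescope (hq0 : 0 < q) (hq1 : q < 1) (b : ℕ) :
    ∑' a : ℕ, (1 / qint q (a + 1) - 1 / qint q (b + a + 2)) = SSF q (b + 1) := by
  have hee := summable_eeF (q := q) hq0 hq1
  have hsh : Summable fun a : ℕ => eeF q (a + (b + 1)) := (summable_nat_add_iff (b + 1)).2 hee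
  have h1 : ∀ a : ℕ, 1 / qint q (a + 1) - 1 / qint q (b + a + 2) =
      eeF q a - eeF q (a + (b + 1)) := by
    intro a
    have e1 : eeF q a = 1 / qint q (a + 1) - (1 - q) := by rw [eeF, key1 hq0 hq1 a]
    have e2 : eeF q (a + (b + 1)) = 1 / qint q (b + a + 2) - (1 - q) := by
      have h := key1 hq0 hq1 (b + a + 1)
      rw [show b + a + 1 + 1 = b + a + 2 from by omega] at h
      rw [eeF, show a + (b + 1) + 1 = b + a + 2 from by omega, h]
    rw [e1, e2]; ring
  rw [tsum_congr h1, Summable.tsum_sub hee hsh]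
  have h2 := Summable.sum_add_tsum_nat_add (f := eeF q) (b + 1) hee
  rw [SSF]
  linarith
end Tel

noncomputable def AF (q : ℝ) (K : ℕ) (p : ℕ × ℕ) : ℝ :=
  q ^ (p.1 + 1) * (q ^ ((K + 1) * (p.2 + 1)) / qint q (p.2 + 1) ^ (K + 1)) /
    (qint q (p.1 + 1) * qint q (p.2 + p.1 + 2))
noncomputable def BF (q : ℝ) (K : ℕ) (p : ℕ × ℕ) : ℝ :=
  q ^ (p.1 + 1) * q ^ ((K + 1) * (p.2 + p.1 + 2)) /
    (qint q (p.1 + 1) * qint q (p.2 + p.1 + 2) ^ (K + 2))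

section Summab
variable {q : ℝ}

lemma one_le_mul' {x y : ℝ} (hx : 1 ≤ x) (hy : 1 ≤ y) : 1 ≤ x * y := by nlinarith

lemma qint_shift_pos (hq0 : 0 < q) (hq1 : q < 1) (a b : ℕ) : 0 < qint q (b + a + 2) := by
  have := qint_pos hq0 hq1 (b + a + 1)
  simpa [show b + a + 1 + 1 = b + a + 2 by omega] using this

lemma one_le_qint_shift (hq0 : 0 < q) (hq1 : q < 1) (a b : ℕ) : 1 ≤ qint q (b + a + 2) := by
  have := one_le_qint hq0 hq1 (b + a + 1)
  simpa [show b + a + 1 + 1 = b + a + 2 by omega] using this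

lemma one_le_qint_shift_pow (hq0 : 0 < q) (hq1 : q < 1) (a b r : ℕ) :
    1 ≤ qint q (b + a + 2) ^ r := by
  have := one_le_qint_pow hq0 hq1 (b + a + 1) r
  simpa [show b + a + 1 + 1 = b + a + 2 by omega] using this

lemma summable_AF (hq0 : 0 < q) (hq1 : q < 1) (K : ℕ) : Summable (AF q K) := by
  apply summable_of_bound hq0 hq1
  intro p
  have hrw : AF q K p = q ^ ((p.1 + 1) + (K + 1) * (p.2 + 1)) /
      (qint q (p.2 + 1) ^ (K + 1) * (qint q (p.1 + 1) * qint q (p.2 + p.1 + 2))) := by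
    rw [AF, pow_add]; ring
  rw [hrw]
  apply term_bound hq0 hq1
  · have : p.2 + 1 ≤ (K + 1) * (p.2 + 1) := Nat.le_mul_of_pos_left _ (by omega)
    omega
  · exact one_le_mul' (one_le_qint_pow hq0 hq1 p.2 (K + 1))
      (one_le_mul' (one_le_qint hq0 hq1 p.1) (one_le_qint_shift hq0 hq1 p.1 p.2))

lemma summable_BF (hq0 : 0 < q) (hq1 : q < 1) (K : ℕ) : Summable (BF q K) := by
  apply summable_of_bound hq0 hq1
  intro p
  have hrw : BF q K p = q ^ ((p.1 + 1) + (K + 1) * (p.2 + p.1 + 2)) /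
      (qint q (p.1 + 1) * qint q (p.2 + p.1 + 2) ^ (K + 2)) := by
    rw [BF, ← pow_add]
  rw [hrw]
  apply term_bound hq0 hq1
  · have : p.2 + p.1 + 2 ≤ (K + 1) * (p.2 + p.1 + 2) := Nat.le_mul_of_pos_left _ (by omega)
    omega
  · exact one_le_mul' (one_le_qint hq0 hq1 p.1) (one_le_qint_shift_pow hq0 hq1 p.1 p.2 (K + 2))

lemma summable_zq2 (hq0 : 0 < q) (hq1 : q < 1) (K j : ℕ) (hj : j < K + 1) :
    Summable (fun p : ℕ × ℕ =>
      q ^ ((K + 2 - j - 1) * (p.2 + p.1 + 2) + (j + 1 - 1) * (p.2 + 1)) /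
        (qint q (p.2 + p.1 + 2) ^ (K + 2 - j) * qint q (p.2 + 1) ^ (j + 1))) := by
  apply summable_of_bound hq0 hq1
  intro p
  apply term_bound hq0 hq1
  · have : p.2 + p.1 + 2 ≤ (K + 2 - j - 1) * (p.2 + p.1 + 2) :=
      Nat.le_mul_of_pos_left _ (by omega : 0 < K + 2 - j - 1)
    omega
  · exact one_le_mul' (one_le_qint_shift_pow hq0 hq1 p.1 p.2 (K + 2 - j))
      (one_le_qint_pow hq0 hq1 p.2 (j + 1))

lemma summable_dd_SS (hq0 : 0 < q) (hq1 : q < 1) (K : ℕ) (r : ℕ → ℕ) :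
    Summable (fun b : ℕ => ddF q K b * SSF q (r b)) := by
  set Cq : ℝ := ∑' n : ℕ, q ^ (n + 1) with hCq
  have hCq0 : 0 ≤ Cq := tsum_nonneg fun n => (pow_pos hq0 _).le
  apply Summable.of_norm_bounded
    ((summable_geom1 hq0 hq1).mul_right Cq)
  intro b
  rw [Real.norm_eq_abs, abs_of_nonneg]
  · have h1 : ddF q K b ≤ q ^ (b + 1) := by
      rw [ddF]
      calc q ^ ((K + 1) * (b + 1)) / qint q (b + 1) ^ (K + 2) ≤ q ^ ((K + 1) * (b + 1)) :=
            div_le_self (pow_pos hq0 _).le (one_le_qint_pow hq0 hq1 b (K + 2))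
        _ ≤ q ^ (b + 1) := pow_le_pow_of_le_one hq0.le hq1.le
            (Nat.le_mul_of_pos_left _ (by omega : 0 < K + 1))
    exact mul_le_mul h1 (SSF_le hq0 hq1 (r b)) (SSF_nonneg hq0 hq1 (r b)) (pow_pos hq0 _).le
  · exact mul_nonneg (le_of_lt (div_pos (pow_pos hq0 _) (pow_pos (qint_pos hq0 hq1 b) _)))
      (SSF_nonneg hq0 hq1 (r b))
end Summab

section Fub
variable {q : ℝ}

lemma tsumA (hq0 : 0 < q) (hq1 : q < 1) (K : ℕ) :
    ∑' p : ℕ × ℕ, AF q K p = ∑' b : ℕ, ddF q K b * SSF q (b + 1) := by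
  have hsA := summable_AF hq0 hq1 K
  have h1 : ∑' p : ℕ × ℕ, AF q K p = ∑' p : ℕ × ℕ, AF q K (p.2, p.1) :=
    ((Equiv.prodComm ℕ ℕ).tsum_eq (AF q K)).symm
  have hsA' : Summable fun p : ℕ × ℕ => AF q K (p.2, p.1) :=
    ((Equiv.prodComm ℕ ℕ).summable_iff).2 hsA
  rw [h1, Summable.tsum_prod hsA']
  refine tsum_congr fun b => ?_
  have inner : ∑' a : ℕ, q ^ (a + 1) / (qint q (a + 1) * qint q (b + a + 2)) =
      (1 / qint q (b + 1)) * SSF q (b + 1) := by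
    rw [tsum_congr fun a => key2 hq0 hq1 a b, tsum_mul_left, tsum_telescope hq0 hq1 b]
  have h2 : ∀ a : ℕ, AF q K (a, b) =
      (q ^ ((K + 1) * (b + 1)) / qint q (b + 1) ^ (K + 1)) *
        (q ^ (a + 1) / (qint q (a + 1) * qint q (b + a + 2))) := by
    intro a; rw [AF]; ring
  rw [tsum_congr h2, tsum_mul_left, inner, ← mul_assoc, div_mul_div_comm, mul_one,
    ← pow_succ, ddF]

set_option maxHeartbeats 1000000 in
lemma tsumB (hq0 : 0 < q) (hq1 : q < 1) (K : ℕ) :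
    ∑' p : ℕ × ℕ, BF q K p = ∑' b : ℕ, ddF q K b * SSF q b := by
  classical
  let h : ℕ × ℕ → ℝ := fun x =>
    if x.1 < x.2 then q ^ (x.1 + 1) * q ^ ((K + 1) * (x.2 + 1)) /
      (qint q (x.1 + 1) * qint q (x.2 + 1) ^ (K + 2)) else 0
  let ι : ℕ × ℕ → ℕ × ℕ := fun p => (p.1, p.2 + p.1 + 1)
  have hcomp : ∀ p : ℕ × ℕ, h (ι p) = BF q K p := by
    intro p
    simp only [h, ι]
    rw [if_pos (by omega : p.1 < p.2 + p.1 + 1), BF,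
      show p.2 + p.1 + 1 + 1 = p.2 + p.1 + 2 from by omega]
  have hinj : Function.Injective ι := by
    intro p p' hpe
    simp only [ι, Prod.mk.injEq] at hpe
    obtain ⟨h1, h2⟩ := hpe
    cases p; cases p'
    simp_all
  have hsupp : ∀ x ∉ Set.range ι, h x = 0 := by
    intro x hx
    have hge : ¬ x.1 < x.2 := by
      intro hlt
      exact hx ⟨(x.1, x.2 - x.1 - 1), by simp only [ι]; ext <;> simp <;> omega⟩
    simp only [h]
    exact if_neg hge
  have hBh : ∑' p : ℕ × ℕ, BF q K p = ∑' x : ℕ × ℕ, h x := by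
    rw [← hinj.tsum_eq (Function.support_subset_iff'.2 hsupp)]
    exact tsum_congr fun p => (hcomp p).symm
  have hsh : Summable h := by
    rw [← hinj.summable_iff hsupp]
    have he : h ∘ ι = BF q K := funext hcomp
    rw [he]
    exact summable_BF hq0 hq1 K
  have hsh' : Summable fun x : ℕ × ℕ => h (x.2, x.1) :=
    ((Equiv.prodComm ℕ ℕ).summable_iff).2 hsh
  have hBh' : ∑' x : ℕ × ℕ, h x = ∑' x : ℕ × ℕ, h (x.2, x.1) :=
    ((Equiv.prodComm ℕ ℕ).tsum_eq h).symm
  rw [hBh, hBh', Summable.tsum_prod hsh']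
  refine tsum_congr fun b => ?_
  have hfin : ∀ a ∉ Finset.range b, h (a, b) = 0 := by
    intro a ha
    rw [Finset.mem_range] at ha
    exact if_neg (by omega)
  calc (∑' a : ℕ, h (a, b)) = ∑ a ∈ Finset.range b, h (a, b) := tsum_eq_sum hfin
    _ = ∑ a ∈ Finset.range b, ddF q K b * eeF q a := by
        refine Finset.sum_congr rfl fun a ha => ?_
        rw [Finset.mem_range] at ha
        simp only [h]
        rw [if_pos ha, ddF, eeF]
        have h1 : qint q (a + 1) ≠ 0 := qint_ne hq0 hq1 a
        have h2 : qint q (b + 1) ≠ 0 := qint_ne hq0 hq1 b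
        field_simp
    _ = ddF q K b * SSF q b := by rw [SSF, Finset.mul_sum]
end Fub

section Main
variable {q : ℝ}

lemma sum_formula (hq0 : 0 < q) (hq1 : q < 1) (K : ℕ) :
    ∑ j ∈ Finset.range (K + 1), zetaQ2 q (K + 2 - j) (j + 1) = zetaQ q (K + 3) := by
  calc ∑ j ∈ Finset.range (K + 1), zetaQ2 q (K + 2 - j) (j + 1)
      = ∑ j ∈ Finset.range (K + 1), ∑' p : ℕ × ℕ,
          q ^ ((K + 2 - j - 1) * (p.2 + p.1 + 2) + (j + 1 - 1) * (p.2 + 1)) /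
            (qint q (p.2 + p.1 + 2) ^ (K + 2 - j) * qint q (p.2 + 1) ^ (j + 1)) := by
        simp only [zetaQ2]
    _ = ∑' p : ℕ × ℕ, ∑ j ∈ Finset.range (K + 1),
          q ^ ((K + 2 - j - 1) * (p.2 + p.1 + 2) + (j + 1 - 1) * (p.2 + 1)) /
            (qint q (p.2 + p.1 + 2) ^ (K + 2 - j) * qint q (p.2 + 1) ^ (j + 1)) :=
        (Summable.tsum_finsetSum fun j hj => summable_zq2 hq0 hq1 K j (Finset.mem_range.1 hj)).symm
    _ = ∑' p : ℕ × ℕ, (AF q K p - BF q K p) := by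
        refine tsum_congr fun p => ?_
        have hk := keyGeom hq0 hq1 K p.1 p.2
        simp only [Nat.add_sub_cancel]
        rw [AF, BF]
        exact hk
    _ = (∑' p : ℕ × ℕ, AF q K p) - ∑' p : ℕ × ℕ, BF q K p :=
        Summable.tsum_sub (summable_AF hq0 hq1 K) (summable_BF hq0 hq1 K)
    _ = (∑' b : ℕ, ddF q K b * SSF q (b + 1)) - ∑' b : ℕ, ddF q K b * SSF q b := by
        rw [tsumA hq0 hq1 K, tsumB hq0 hq1 K]
    _ = ∑' b : ℕ, (ddF q K b * SSF q (b + 1) - ddF q K b * SSF q b) :=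
        (Summable.tsum_sub (summable_dd_SS hq0 hq1 K (fun b => b + 1))
          (summable_dd_SS hq0 hq1 K (fun b => b))).symm
    _ = ∑' b : ℕ, q ^ ((K + 3 - 1) * (b + 1)) / qint q (b + 1) ^ (K + 3) := by
        refine tsum_congr fun b => ?_
        have hS : SSF q (b + 1) = SSF q b + eeF q b := Finset.sum_range_succ _ b
        rw [hS, show K + 3 - 1 = K + 2 from by omega, ddF, eeF]
        ring
    _ = zetaQ q (K + 3) := by rw [zetaQ]

end Main

theorem stmt_17 (q t : ℝ) (hq0 : 0 < q) (hq1 : q < 1) (k : ℕ) (hk : 2 ≤ k) :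
    ∑ j ∈ Finset.range (k - 1), zetaQT q t (k - j) (j + 1) =
      (1 + ((k : ℝ) - 1) * t) * zetaQ q (k + 1) +
        t * ((k : ℝ) - 1) * (1 - q) * zetaQ q k := by
  obtain ⟨K, rfl⟩ : ∃ K, k = K + 2 := ⟨k - 2, by omega⟩
  rw [show K + 2 - 1 = K + 1 from by omega]
  have hT : ∀ j ∈ Finset.range (K + 1), zetaQT q t (K + 2 - j) (j + 1) =
      zetaQ2 q (K + 2 - j) (j + 1) + t * (zetaQ q (K + 3) + (1 - q) * zetaQ q (K + 2)) := by
    intro j hj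
    rw [Finset.mem_range] at hj
    rw [zetaQT, show K + 2 - j + (j + 1) = K + 3 from by omega,
      show K + 3 - 1 = K + 2 from by omega]
  rw [Finset.sum_congr rfl hT, Finset.sum_add_distrib, Finset.sum_const, Finset.card_range,
    sum_formula hq0 hq1 K, nsmul_eq_mul, show K + 2 + 1 = K + 3 from by omega]
  push_cast
  ring
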